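/- Let φ: ℝ → ℝ satisfy the extended envelope property: there exist c₁, c₂ ≥ 0 and d₁, d₂ > 0 with |φ(u)| ≥ c₁ + d₁|u| for all u ≥ 0 (or for all u ≤ 0), and |φ(u)| ≤ c₂ + d₂|u| for all u ∈ ℝ. Then for any symmetric random variable X (i.e., X and −X have the same distribution) with all finite moments, there exist constants d, D > 0 such that d ≤ ‖φ(X)‖_k / ‖X‖_k ≤ D for all k ≥ 1. -/

import Mathlib

open MeasureTheory ProbabilityTheory Real
open scoped ENNReal

/-- `k`-th moment norm of a real random variable. -/
noncomputable def mnorm {Ω : Type*} [MeasurableSpace Ω] (μ : Measure Ω) (X : Ω → ℝ)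
    (k : ℕ) : ℝ :=
  (∫ ω, |X ω| ^ k ∂μ) ^ ((k : ℝ)⁻¹)

section aux
variable {Ω : Type*} [MeasurableSpace Ω] {μ : Measure Ω} {X : Ω → ℝ} {k : ℕ}

lemma memLp_of_int (hX : Measurable X) (hk : 1 ≤ k)
    (hi : Integrable (fun ω => |X ω| ^ k) μ) : MemLp X (k : ℝ≥0∞) μ := by
  have hk0 : (k : ℝ≥0∞) ≠ 0 := by exact_mod_cast Nat.pos_of_ne_zero (by omega) |>.ne'
  have hkt : (k : ℝ≥0∞) ≠ ∞ := ENNReal.natCast_ne_top k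
  rw [← memLp_norm_rpow_iff (q := (k : ℝ≥0∞)) hX.aestronglyMeasurable hk0 hkt,
    ENNReal.div_self hk0 hkt]
  rw [memLp_one_iff_integrable]
  have : (fun x => ‖X x‖ ^ ((k : ℝ≥0∞)).toReal) = fun ω => |X ω| ^ k := by
    ext x
    rw [ENNReal.toReal_natCast, Real.rpow_natCast, Real.norm_eq_abs]
  rw [this]; exact hi

lemma mnorm_eq_toReal (hk : 1 ≤ k) (hm : MemLp X (k : ℝ≥0∞) μ) :
    mnorm μ X k = (eLpNorm X (k : ℝ≥0∞) μ).toReal := by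
  have hk0 : (k : ℝ≥0∞) ≠ 0 := by exact_mod_cast Nat.pos_of_ne_zero (by omega) |>.ne'
  have hkt : (k : ℝ≥0∞) ≠ ∞ := ENNReal.natCast_ne_top k
  rw [hm.eLpNorm_eq_integral_rpow_norm hk0 hkt, ENNReal.toReal_ofReal (by positivity)]
  unfold mnorm
  rw [ENNReal.toReal_natCast]
  congr 1
  exact integral_congr_ae (ae_of_all _ fun ω => by
    simp [Real.rpow_natCast, abs_nonneg])
end aux

/-- If `φ` satisfies the extended envelope property, then for any symmetric random
variable `X` with all moments finite and positive, `‖φ(X)‖_k ≍ ‖X‖_k`. -/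
theorem envelope_moment_equiv {Ω : Type*} [MeasurableSpace Ω] (μ : Measure Ω)
    [IsProbabilityMeasure μ] (X : Ω → ℝ) (hX : Measurable X)
    (hsym : μ.map X = μ.map (fun ω => -X ω))
    (hint : ∀ k : ℕ, 1 ≤ k → Integrable (fun ω => |X ω| ^ k) μ)
    (hpos : ∀ k : ℕ, 1 ≤ k → 0 < mnorm μ X k)
    (φ : ℝ → ℝ) (hφmeas : Measurable φ)
    (c₁ c₂ d₁ d₂ : ℝ) (hc₁ : 0 ≤ c₁) (hc₂ : 0 ≤ c₂) (hd₁ : 0 < d₁) (hd₂ : 0 < d₂)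
    (hlow : (∀ u : ℝ, 0 ≤ u → c₁ + d₁ * |u| ≤ |φ u|) ∨
            (∀ u : ℝ, u ≤ 0 → c₁ + d₁ * |u| ≤ |φ u|))
    (hup : ∀ u : ℝ, |φ u| ≤ c₂ + d₂ * |u|) :
    ∃ d D : ℝ, 0 < d ∧ 0 < D ∧ ∀ k : ℕ, 1 ≤ k →
      d ≤ mnorm μ (fun ω => φ (X ω)) k / mnorm μ X k ∧
      mnorm μ (fun ω => φ (X ω)) k / mnorm μ X k ≤ D := by
  have hm1pos : 0 < mnorm μ X 1 := hpos 1 le_rfl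
  set m1 := mnorm μ X 1 with hm1
  refine ⟨d₁ / 2, c₂ / m1 + d₂, by positivity, by positivity, fun k hk => ?_⟩
  have hkR : (0:ℝ) < k := by exact_mod_cast Nat.pos_of_ne_zero (by omega)
  have hk0 : (k : ℝ≥0∞) ≠ 0 := by
    simpa using (Nat.pos_of_ne_zero (by omega : k ≠ 0)).ne'
  have hkt : (k : ℝ≥0∞) ≠ ∞ := ENNReal.natCast_ne_top k
  have hk1 : (1 : ℝ≥0∞) ≤ (k : ℝ≥0∞) := by exact_mod_cast hk
  have hMX : MemLp X (k : ℝ≥0∞) μ := memLp_of_int hX hk (hint k hk)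
  have hMX1 : MemLp X ((1:ℕ) : ℝ≥0∞) μ :=
    memLp_of_int hX le_rfl (by simpa using hint 1 le_rfl)
  have haesY : AEStronglyMeasurable (fun ω => φ (X ω)) μ :=
    (hφmeas.comp hX).aestronglyMeasurable
  -- the dominating function
  have hgnn : ∀ ω, 0 ≤ c₂ + d₂ * |X ω| := fun ω => by positivity
  have hg : MemLp (fun ω => c₂ + d₂ * |X ω|) (k : ℝ≥0∞) μ := by
    have h1 : MemLp (fun ω => d₂ * |X ω|) (k : ℝ≥0∞) μ := by
      have := (hMX.norm).const_mul d₂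
      simpa [Real.norm_eq_abs] using this
    exact (memLp_const (μ := μ) (p := (k : ℝ≥0∞)) c₂).add h1
  have hY : MemLp (fun ω => φ (X ω)) (k : ℝ≥0∞) μ := by
    refine hg.of_le haesY (ae_of_all _ fun ω => ?_)
    rw [Real.norm_eq_abs, Real.norm_eq_abs, abs_of_nonneg (hgnn ω)]
    exact hup _
  -- upper bound at eLpNorm level
  have hub_e : eLpNorm (fun ω => φ (X ω)) (k : ℝ≥0∞) μ ≤
      ENNReal.ofReal c₂ + ENNReal.ofReal d₂ * eLpNorm X (k : ℝ≥0∞) μ := by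
    calc eLpNorm (fun ω => φ (X ω)) (k : ℝ≥0∞) μ
        ≤ eLpNorm (fun ω => c₂ + d₂ * |X ω|) (k : ℝ≥0∞) μ :=
          eLpNorm_mono_real fun ω => by rw [Real.norm_eq_abs]; exact hup _
      _ ≤ eLpNorm (fun _ => c₂) (k : ℝ≥0∞) μ +
            eLpNorm (fun ω => d₂ * |X ω|) (k : ℝ≥0∞) μ :=
          eLpNorm_add_le aestronglyMeasurable_const
            ((hX.norm.const_mul d₂).aestronglyMeasurable.congr
              (ae_of_all _ fun ω => by simp [Real.norm_eq_abs])) hk1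
      _ = ENNReal.ofReal c₂ + ENNReal.ofReal d₂ * eLpNorm X (k : ℝ≥0∞) μ := by
          congr 1
          · rw [eLpNorm_const c₂ hk0 (IsProbabilityMeasure.ne_zero μ)]
            simp [Real.enorm_eq_ofReal hc₂]
          · have : (fun ω => d₂ * |X ω|) = d₂ • (fun ω => ‖X ω‖) := by
              funext ω; simp [Real.norm_eq_abs]
            rw [this, eLpNorm_const_smul, eLpNorm_norm]
            simp [ENNReal.smul_def, Real.enorm_eq_ofReal hd₂.le]
  have hub : mnorm μ (fun ω => φ (X ω)) k ≤ c₂ + d₂ * mnorm μ X k := by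
    rw [mnorm_eq_toReal hk hY, mnorm_eq_toReal hk hMX]
    have hfin : ENNReal.ofReal c₂ + ENNReal.ofReal d₂ * eLpNorm X (k : ℝ≥0∞) μ ≠ ∞ := by
      simp [ENNReal.add_ne_top, ENNReal.mul_ne_top, hMX.2.ne]
    have h := ENNReal.toReal_mono hfin hub_e
    rwa [ENNReal.toReal_add (by simp) (by simp [ENNReal.mul_ne_top, hMX.2.ne]),
      ENNReal.toReal_mul, ENNReal.toReal_ofReal hc₂, ENNReal.toReal_ofReal hd₂.le] at h
  -- monotonicity of moments
  have hmono : m1 ≤ mnorm μ X k := by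
    rw [hm1, mnorm_eq_toReal le_rfl hMX1, mnorm_eq_toReal hk hMX]
    refine ENNReal.toReal_mono hMX.2.ne ?_
    exact eLpNorm_le_eLpNorm_of_exponent_le (by exact_mod_cast hk1) hX.aestronglyMeasurable
  -- lower bound
  set f : ℝ → ℝ≥0∞ := fun x => if 0 ≤ x then (‖x‖₊ : ℝ≥0∞) ^ k else 0 with hf
  have hf_meas : Measurable f := by
    refine Measurable.ite measurableSet_Ici ?_ measurable_const
    exact (measurable_coe_nnreal_ennreal.comp measurable_nnnorm).pow_const k
  have hsym_eq : ∫⁻ ω, f (X ω) ∂μ = ∫⁻ ω, f (-X ω) ∂μ := by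
    rw [← lintegral_map hf_meas hX, ← lintegral_map (g := fun ω => -X ω) hf_meas hX.neg, hsym]
  set Ltot := ∫⁻ ω, (‖X ω‖₊ : ℝ≥0∞) ^ k ∂μ with hLtot
  set Lphi := ∫⁻ ω, (‖φ (X ω)‖₊ : ℝ≥0∞) ^ k ∂μ with hLphi
  have hhalf : Ltot ≤ 2 * ∫⁻ ω, f (X ω) ∂μ := by
    have hsplit : ∀ ω, (‖X ω‖₊ : ℝ≥0∞) ^ k ≤ f (X ω) + f (-X ω) := by
      intro ω
      by_cases h : 0 ≤ X ω
      · simp only [hf, if_pos h]; exact le_add_right le_rfl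
      · have h' : 0 ≤ -X ω := by linarith
        simp only [hf, if_pos h', nnnorm_neg]
        exact le_add_left le_rfl
    calc Ltot ≤ ∫⁻ ω, (f (X ω) + f (-X ω)) ∂μ := lintegral_mono hsplit
      _ = (∫⁻ ω, f (X ω) ∂μ) + ∫⁻ ω, f (-X ω) ∂μ :=
          lintegral_add_left (hf_meas.comp hX) _
      _ = 2 * ∫⁻ ω, f (X ω) ∂μ := by rw [← hsym_eq, two_mul]
  have hkey : ∀ ω : Ω, 0 ≤ X ω → (∀ u : ℝ, 0 ≤ u → c₁ + d₁ * |u| ≤ |φ u|) →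
      ENNReal.ofReal d₁ ^ k * (‖X ω‖₊ : ℝ≥0∞) ^ k ≤ (‖φ (X ω)‖₊ : ℝ≥0∞) ^ k := by
    intro ω h hl
    rw [← mul_pow]
    refine pow_le_pow_left' ?_ _
    rw [← enorm_eq_nnnorm, ← enorm_eq_nnnorm, Real.enorm_eq_ofReal_abs, Real.enorm_eq_ofReal_abs,
      ← ENNReal.ofReal_mul hd₁.le]
    exact ENNReal.ofReal_le_ofReal (by nlinarith [hl (X ω) h, abs_nonneg (X ω)])
  have hlb_int : ENNReal.ofReal d₁ ^ k * ∫⁻ ω, f (X ω) ∂μ ≤ Lphi := by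
    rcases hlow with hl | hl
    · calc ENNReal.ofReal d₁ ^ k * ∫⁻ ω, f (X ω) ∂μ
          = ∫⁻ ω, ENNReal.ofReal d₁ ^ k * f (X ω) ∂μ :=
            (lintegral_const_mul _ (hf_meas.comp hX)).symm
        _ ≤ Lphi := by
            refine lintegral_mono fun ω => ?_
            by_cases h : 0 ≤ X ω
            · simp only [hf, if_pos h]; exact hkey ω h hl
            · simp [hf, if_neg h]
    · rw [hsym_eq]
      calc ENNReal.ofReal d₁ ^ k * ∫⁻ ω, f (-X ω) ∂μ
          = ∫⁻ ω, ENNReal.ofReal d₁ ^ k * f (-X ω) ∂μ :=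
            (lintegral_const_mul _ (hf_meas.comp hX.neg)).symm
        _ ≤ Lphi := by
            refine lintegral_mono fun ω => ?_
            by_cases h : 0 ≤ -X ω
            · simp only [hf, if_pos h, nnnorm_neg]
              rw [← mul_pow]
              refine pow_le_pow_left' ?_ _
              rw [← enorm_eq_nnnorm, ← enorm_eq_nnnorm, Real.enorm_eq_ofReal_abs, Real.enorm_eq_ofReal_abs,
                ← ENNReal.ofReal_mul hd₁.le]
              exact ENNReal.ofReal_le_ofReal
                (by nlinarith [hl (X ω) (by linarith), abs_nonneg (X ω)])
            · simp [hf, if_neg h]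
  have hhalf' : Ltot / 2 ≤ ∫⁻ ω, f (X ω) ∂μ :=
    ENNReal.div_le_of_le_mul' hhalf
  have hlb_int' : ENNReal.ofReal d₁ ^ k * (Ltot / 2) ≤ Lphi :=
    le_trans (mul_le_mul_right hhalf' _) hlb_int
  -- eLpNorm expressions
  have heX : eLpNorm X (k : ℝ≥0∞) μ = Ltot ^ ((k:ℝ)⁻¹) := by
    rw [eLpNorm_eq_lintegral_rpow_enorm_toReal hk0 hkt]
    simp [ENNReal.toReal_natCast, ENNReal.rpow_natCast, one_div]
    simp only [hLtot, enorm_eq_nnnorm]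
  have heY : eLpNorm (fun ω => φ (X ω)) (k : ℝ≥0∞) μ = Lphi ^ ((k:ℝ)⁻¹) := by
    rw [eLpNorm_eq_lintegral_rpow_enorm_toReal hk0 hkt]
    simp [ENNReal.toReal_natCast, ENNReal.rpow_natCast, one_div]
    simp only [hLphi, enorm_eq_nnnorm]
  have hchain : ENNReal.ofReal (d₁ / 2) * eLpNorm X (k : ℝ≥0∞) μ ≤
      eLpNorm (fun ω => φ (X ω)) (k : ℝ≥0∞) μ := by
    rw [heX, heY]
    have h1 : (ENNReal.ofReal d₁ ^ k * (Ltot / 2)) ^ ((k:ℝ)⁻¹) ≤ Lphi ^ ((k:ℝ)⁻¹) :=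
      ENNReal.rpow_le_rpow hlb_int' (by positivity)
    refine le_trans ?_ h1
    rw [ENNReal.mul_rpow_of_nonneg _ _ (by positivity),
      ← ENNReal.rpow_natCast (ENNReal.ofReal d₁) k, ← ENNReal.rpow_mul,
      mul_inv_cancel₀ (by positivity : (k:ℝ) ≠ 0), ENNReal.rpow_one,
      ENNReal.div_rpow_of_nonneg _ _ (by positivity)]
    have hkinv : ((k:ℝ))⁻¹ ≤ 1 :=
      inv_le_one_of_one_le₀ (by exact_mod_cast hk)
    have h2 : (2:ℝ≥0∞) ^ ((k:ℝ)⁻¹) ≤ 2 := by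
      have := ENNReal.rpow_le_rpow_of_exponent_le
        (x := (2:ℝ≥0∞)) (by norm_num) hkinv
      simpa using this
    have h3 : Ltot ^ ((k:ℝ)⁻¹) / 2 ≤ Ltot ^ ((k:ℝ)⁻¹) / 2 ^ ((k:ℝ)⁻¹) :=
      ENNReal.div_le_div_left h2 _
    refine le_trans ?_ (mul_le_mul_right h3 _)
    rw [ENNReal.ofReal_div_of_pos (by norm_num), ENNReal.ofReal_ofNat,
      div_eq_mul_inv, div_eq_mul_inv, mul_right_comm, mul_assoc]
  have hlb : d₁ / 2 * mnorm μ X k ≤ mnorm μ (fun ω => φ (X ω)) k := by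
    rw [mnorm_eq_toReal hk hY, mnorm_eq_toReal hk hMX]
    have h := ENNReal.toReal_mono hY.2.ne hchain
    rwa [ENNReal.toReal_mul, ENNReal.toReal_ofReal (by positivity)] at h
  have hmk := hpos k hk
  constructor
  · rw [le_div_iff₀ hmk]; exact hlb
  · rw [div_le_iff₀ hmk]
    have hc : c₂ ≤ c₂ / m1 * mnorm μ X k := by
      rw [div_mul_eq_mul_div, le_div_iff₀ hm1pos]
      exact mul_le_mul_of_nonneg_left hmono hc₂
    nlinarith [hub, hc, hmk.le]
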